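/- Let k be a field of characteristic p > 0 and F ∈ k[X]^n. Let W be the p^n × p^n matrix indexed by multiindices α,β ∈ [0,p−1]^n with entries W_{αβ} = ∂^α F^β. Then det W = c_p^n · Δ(F), where c_p = ∏_{k=1}^{p−1} k!. -/

import Mathlib

open MvPolynomial

section Aux

variable {k : Type*} [Field k] {n : ℕ}

/-- The linear-map version of the differential operator `∂^α`. -/
noncomputable def Dlin (α : Fin n → ℕ) :
    Module.End k (MvPolynomial (Fin n) k) :=
  (List.ofFn fun i : Fin n =>
    (((pderiv i : Derivation k (MvPolynomial (Fin n) k) (MvPolynomial (Fin n) k)) :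
      MvPolynomial (Fin n) k →ₗ[k] MvPolynomial (Fin n) k) ^ (α i))).prod

lemma endListProd_coe {M : Type*} [AddCommMonoid M] [Module k M]
    (l : List (Module.End k M)) :
    ⇑l.prod = (l.map fun f => (DFunLike.coe f : M → M)).foldr (· ∘ ·) id := by
  induction l with
  | nil =>
    funext x
    simp
  | cons f l ih =>
    funext x
    simp [List.prod_cons, Module.End.mul_apply, ih]

lemma Dlin_coe (α : Fin n → ℕ) :
    ⇑(Dlin (k := k) α) =
      (List.ofFn fun i : Fin n => (⇑(pderiv i (R := k)))^[α i]).foldr (· ∘ ·) id := by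
  rw [Dlin, endListProd_coe, List.map_ofFn]
  refine congrArg (List.foldr (· ∘ ·) id) (congrArg List.ofFn (funext fun i => ?_))
  simp only [Function.comp_apply]
  rw [Module.End.coe_pow, Derivation.coeFn_coe]

lemma iter_pderiv_monomial (i : Fin n) (a : ℕ) (s : Fin n →₀ ℕ) (c : k) :
    (⇑(pderiv i (R := k)))^[a] (monomial s c) =
      monomial (s - Finsupp.single i a) (c * ((s i).descFactorial a : ℕ)) := by
  induction a with
  | zero => simp
  | succ a ih =>
    rw [Function.iterate_succ_apply', ih, pderiv_monomial]
    have h1 : s - Finsupp.single i a - Finsupp.single i 1 = s - Finsupp.single i (a + 1) := by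
      rw [tsub_tsub, ← Finsupp.single_add]
    have h2 : (s - Finsupp.single i a) i = s i - a := by
      simp [Finsupp.tsub_apply]
    rw [h1, h2, Nat.descFactorial_succ]
    congr 1
    push_cast
    ring

lemma prod_X_pow_on (s : Finset (Fin n)) (g : Fin n → ℕ) :
    (∏ i ∈ s, (X i : MvPolynomial (Fin n) k) ^ g i) =
      monomial (∑ i ∈ s, Finsupp.single i (g i)) 1 := by
  classical
  induction s using Finset.induction_on with
  | empty => simp
  | insert _ _ h ih =>
    rw [Finset.prod_insert h, Finset.sum_insert h, ih, X_pow_eq_monomial, monomial_mul, one_mul]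

lemma listD (α : Fin n → ℕ) (l : List (Fin n)) (hl : l.Nodup) (s : Fin n →₀ ℕ) (c : k) :
    ((l.map fun i =>
        (((pderiv i : Derivation k (MvPolynomial (Fin n) k) (MvPolynomial (Fin n) k)) :
          MvPolynomial (Fin n) k →ₗ[k] MvPolynomial (Fin n) k) ^ (α i))).prod)
      (monomial s c) =
      monomial (s - ∑ i ∈ l.toFinset, Finsupp.single i (α i))
        (c * ((∏ i ∈ l.toFinset, (s i).descFactorial (α i) : ℕ))) := by
  classical
  induction l with
  | nil => simp
  | cons j l ih =>
    have hj : j ∉ l := (List.nodup_cons.mp hl).1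
    have hl' : l.Nodup := (List.nodup_cons.mp hl).2
    have hj' : j ∉ l.toFinset := by simpa using hj
    rw [List.map_cons, List.prod_cons, Module.End.mul_apply, ih hl', Module.End.pow_apply]
    have hcoe : ⇑((pderiv j : Derivation k (MvPolynomial (Fin n) k) (MvPolynomial (Fin n) k)) :
        MvPolynomial (Fin n) k →ₗ[k] MvPolynomial (Fin n) k) = ⇑(pderiv j (R := k)) :=
      Derivation.coeFn_coe _
    rw [hcoe, iter_pderiv_monomial]
    have hT : (∑ i ∈ l.toFinset, Finsupp.single i (α i)) j = 0 := by
      rw [Finsupp.finset_sum_apply]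
      exact Finset.sum_eq_zero fun i hi =>
        Finsupp.single_eq_of_ne (fun h => hj' (h ▸ hi))
    have h2 : (s - ∑ i ∈ l.toFinset, Finsupp.single i (α i)) j = s j := by
      rw [Finsupp.tsub_apply, hT, Nat.sub_zero]
    have h1 : s - (∑ i ∈ l.toFinset, Finsupp.single i (α i)) - Finsupp.single j (α j) =
        s - ∑ i ∈ (j :: l).toFinset, Finsupp.single i (α i) := by
      rw [tsub_tsub, List.toFinset_cons, Finset.sum_insert hj', add_comm]
    rw [h1, h2]
    congr 1
    rw [List.toFinset_cons, Finset.prod_insert hj']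
    push_cast
    ring

lemma Dlin_monomial (α : Fin n → ℕ) (s : Fin n →₀ ℕ) (c : k) :
    Dlin (k := k) α (monomial s c) =
      monomial (s - ∑ i : Fin n, Finsupp.single i (α i))
        (c * ((∏ i : Fin n, (s i).descFactorial (α i) : ℕ))) := by
  rw [Dlin, List.ofFn_eq_map, listD α _ (List.nodup_finRange n)]
  simp [List.toFinset_finRange]

lemma sum_single_apply (g : Fin n → ℕ) (i : Fin n) :
    (∑ j : Fin n, Finsupp.single j (g j)) i = g i := by
  rw [Finsupp.finset_sum_apply]
  simp [Finsupp.single_apply]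

lemma pderiv_adjoin_zero (p : ℕ) [CharP k p] (i : Fin n) (u : MvPolynomial (Fin n) k)
    (hu : u ∈ Algebra.adjoin k
      (Set.range fun i : Fin n => (X i : MvPolynomial (Fin n) k) ^ p)) :
    pderiv i u = 0 := by
  haveI : CharP (MvPolynomial (Fin n) k) p := inferInstance
  induction hu using Algebra.adjoin_induction with
  | mem x hx =>
    obtain ⟨j, rfl⟩ := hx
    rw [Derivation.leibniz_pow]
    have : (p : MvPolynomial (Fin n) k) = 0 := CharP.cast_eq_zero _ p
    rw [nsmul_eq_mul, this, zero_mul]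
  | algebraMap r => simp [algebraMap_eq]
  | add x y hx hy ihx ihy => rw [map_add, ihx, ihy, add_zero]
  | mul x y hx hy ihx ihy => rw [Derivation.leibniz, ihx, ihy, smul_zero, smul_zero, add_zero]

lemma iter_pderiv_mul_left (i : Fin n) (a : ℕ) (u : MvPolynomial (Fin n) k)
    (hu : pderiv i u = 0) (v : MvPolynomial (Fin n) k) :
    (⇑(pderiv i (R := k)))^[a] (u * v) = u * (⇑(pderiv i (R := k)))^[a] v := by
  induction a generalizing v with
  | zero => rfl
  | succ a ih =>
    rw [Function.iterate_succ_apply, Function.iterate_succ_apply]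
    rw [show pderiv i (u * v) = u * pderiv i v by
      rw [Derivation.leibniz, hu, smul_zero, add_zero, smul_eq_mul]]
    exact ih _

lemma Dlin_mul_left (α : Fin n → ℕ) (u : MvPolynomial (Fin n) k)
    (hu : ∀ i, pderiv i u = 0) (v : MvPolynomial (Fin n) k) :
    Dlin (k := k) α (u * v) = u * Dlin (k := k) α v := by
  rw [Dlin, List.ofFn_eq_map]
  generalize List.finRange n = l
  induction l with
  | nil => simp
  | cons j l ih =>
    simp only [List.map_cons, List.prod_cons, Module.End.mul_apply]
    rw [ih, Module.End.pow_apply, Module.End.pow_apply,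
      Derivation.coeFn_coe, iter_pderiv_mul_left j _ u (hu j)]

lemma natCast_pow_pow_p (p : ℕ) (hp : p.Prime) [CharP k p] (m t : ℕ) :
    ((m : k)) ^ (p ^ t) = (m : k) := by
  haveI := Fact.mk hp
  induction t with
  | zero => simp
  | succ t ih =>
    rw [pow_succ, pow_mul, ih]
    have := map_natCast (frobenius k p) m
    rwa [frobenius_def] at this

lemma const_comp (p : ℕ) (hp : p.Prime) [CharP k p] :
    (∏ α : Fin n → Fin p, ∏ i : Fin n, (((α i : ℕ)).factorial : k)) =
      (∏ j ∈ Finset.Icc 1 (p - 1), (j.factorial : k)) ^ n := by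
  classical
  have hc : (∏ b : Fin p, (((b : ℕ)).factorial : k)) =
      ∏ j ∈ Finset.Icc 1 (p - 1), (j.factorial : k) := by
    rw [Fin.prod_univ_eq_prod_range (fun j => ((j.factorial : k)))]
    rw [Finset.range_eq_Ico, Finset.prod_eq_prod_Ico_succ_bot hp.pos]
    have : Finset.Ico 1 p = Finset.Icc 1 (p - 1) := by
      ext x
      simp only [Finset.mem_Ico, Finset.mem_Icc]
      omega
    rw [this]
    simp
  rw [Finset.prod_comm]
  have hfix : ∀ i : Fin n, (∏ α : Fin n → Fin p, (((α i : ℕ)).factorial : k)) =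
      ∏ j ∈ Finset.Icc 1 (p - 1), (j.factorial : k) := by
    intro i
    rw [Fintype.prod_equiv (Equiv.funSplitAt i (Fin p))
      (fun α => (((α i : ℕ)).factorial : k)) (fun x => (((x.1 : ℕ)).factorial : k))
      (fun α => rfl)]
    rw [Fintype.prod_prod_type]
    have hone : ∀ b : Fin p,
        (∏ _f : ({ j : Fin n // j ≠ i } → Fin p), (((b : ℕ)).factorial : k)) =
          (((b : ℕ)).factorial : k) := by
      intro b
      rw [Finset.prod_const, Finset.card_univ, Fintype.card_fun, Fintype.card_fin]
      exact natCast_pow_pow_p p hp _ _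
    rw [Finset.prod_congr rfl fun b _ => hone b]
    exact hc
  calc (∏ i : Fin n, ∏ α : Fin n → Fin p, (((α i : ℕ)).factorial : k))
      = ∏ _i : Fin n, ∏ j ∈ Finset.Icc 1 (p - 1), (j.factorial : k) :=
        Finset.prod_congr rfl fun i _ => hfix i
    _ = (∏ j ∈ Finset.Icc 1 (p - 1), (j.factorial : k)) ^ n := by
        rw [Finset.prod_const, Finset.card_univ, Fintype.card_fin]

end Aux

theorem stmt8 {k : Type*} [Field k] (p : ℕ) (hp : p.Prime) [CharP k p] (n : ℕ)
    (F : Fin n → MvPolynomial (Fin n) k)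
    (UF : Matrix (Fin n → Fin p) (Fin n → Fin p) (MvPolynomial (Fin n) k))
    (hUFmem : ∀ α β, UF α β ∈
      Algebra.adjoin k (Set.range fun i : Fin n => (X i : MvPolynomial (Fin n) k) ^ p))
    (hUF : ∀ α : Fin n → Fin p,
      ∏ i : Fin n, F i ^ (α i : ℕ) = ∑ β : Fin n → Fin p, UF α β * ∏ i : Fin n, X i ^ (β i : ℕ)) :
    (Matrix.of fun α β : Fin n → Fin p =>
        (List.ofFn fun i : Fin n => (⇑(pderiv i))^[(α i : ℕ)]).foldr (· ∘ ·) id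
          (∏ i : Fin n, F i ^ (β i : ℕ))).det =
      C ((∏ j ∈ Finset.Icc 1 (p - 1), (j.factorial : k)) ^ n) * UF.det := by
  classical
  -- The "Vandermonde-like" matrix V with entries ∂^α X^γ
  set V : Matrix (Fin n → Fin p) (Fin n → Fin p) (MvPolynomial (Fin n) k) :=
    Matrix.of fun α γ : Fin n → Fin p =>
      Dlin (k := k) (fun i => (α i : ℕ)) (∏ i : Fin n, X i ^ (γ i : ℕ)) with hV
  -- entry formula for V
  have hVentry : ∀ α γ : Fin n → Fin p,
      V α γ = monomial
        ((∑ i : Fin n, Finsupp.single i (γ i : ℕ)) - ∑ i : Fin n, Finsupp.single i (α i : ℕ))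
        (((∏ i : Fin n, ((γ i : ℕ)).descFactorial (α i : ℕ) : ℕ)) : k) := by
    intro α γ
    rw [hV]
    show Dlin (k := k) (fun i => (α i : ℕ)) (∏ i : Fin n, X i ^ (γ i : ℕ)) = _
    rw [prod_X_pow_on Finset.univ (fun i => (γ i : ℕ)), Dlin_monomial, one_mul]
    simp only [sum_single_apply]
  -- main identity: W = V * UFᵀ
  have hW : (Matrix.of fun α β : Fin n → Fin p =>
      (List.ofFn fun i : Fin n => (⇑(pderiv i))^[(α i : ℕ)]).foldr (· ∘ ·) id
        (∏ i : Fin n, F i ^ (β i : ℕ))) = V * UF.transpose := by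
    refine Matrix.ext fun α β => ?_
    show (List.ofFn fun i : Fin n => (⇑(pderiv i))^[(α i : ℕ)]).foldr (· ∘ ·) id
        (∏ i : Fin n, F i ^ (β i : ℕ)) = _
    rw [← Dlin_coe (k := k) (fun i => (α i : ℕ)), hUF β, map_sum]
    rw [Matrix.mul_apply]
    refine Finset.sum_congr rfl fun γ _ => ?_
    rw [Dlin_mul_left _ _ (fun i => pderiv_adjoin_zero p i _ (hUFmem β γ))]
    rw [Matrix.transpose_apply]
    show UF β γ * V α γ = V α γ * UF β γ
    ring
  rw [hW, Matrix.det_mul, Matrix.det_transpose]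
  congr 1
  -- compute det V by triangularity
  set e : (Fin n → Fin p) ≃ Fin (p ^ n) := finFunctionFinEquiv (m := p) (n := n) with he
  have htri : (V.submatrix e.symm e.symm).BlockTriangular id := by
    intro a b hab
    simp only [id_eq] at hab
    by_cases hle : ∀ i, (e.symm a i : ℕ) ≤ (e.symm b i : ℕ)
    · exfalso
      have h1 : (a : ℕ) ≤ (b : ℕ) := by
        have ha := finFunctionFinEquiv_apply (m := p) (n := n) (e.symm a)
        have hb := finFunctionFinEquiv_apply (m := p) (n := n) (e.symm b)
        rw [← he, e.apply_symm_apply] at ha hb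
        rw [ha, hb]
        exact Finset.sum_le_sum fun i _ => Nat.mul_le_mul_right _ (hle i)
      exact absurd h1 (not_le.mpr hab)
    · push_neg at hle
      obtain ⟨i, hi⟩ := hle
      show V (e.symm a) (e.symm b) = 0
      rw [hVentry]
      have : (∏ j : Fin n, ((e.symm b j : ℕ)).descFactorial (e.symm a j : ℕ) : ℕ) = 0 :=
        Finset.prod_eq_zero (Finset.mem_univ i)
          ((Nat.descFactorial_eq_zero_iff_lt).mpr hi)
      rw [this]
      simp
  have hdetV : V.det = C ((∏ j ∈ Finset.Icc 1 (p - 1), (j.factorial : k)) ^ n) := by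
    rw [← Matrix.det_submatrix_equiv_self e.symm V,
      Matrix.det_of_upperTriangular htri]
    have hdiag : ∀ a, V.submatrix e.symm e.symm a a =
        C ((∏ i : Fin n, (((e.symm a i : ℕ)).factorial : k))) := by
      intro a
      show V (e.symm a) (e.symm a) = _
      rw [hVentry, tsub_self]
      rw [monomial_zero']
      congr 1
      push_cast
      exact Finset.prod_congr rfl fun i _ => by rw [Nat.descFactorial_self]
    calc (∏ a, V.submatrix e.symm e.symm a a)
        = ∏ a, C ((∏ i : Fin n, (((e.symm a i : ℕ)).factorial : k))) :=
          Finset.prod_congr rfl fun a _ => hdiag a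
      _ = C (∏ a, (∏ i : Fin n, (((e.symm a i : ℕ)).factorial : k))) := by
          rw [map_prod]
      _ = C (∏ α : Fin n → Fin p, ∏ i : Fin n, (((α i : ℕ)).factorial : k)) := by
          rw [Equiv.prod_comp e.symm (fun α => ∏ i : Fin n, (((α i : ℕ)).factorial : k))]
      _ = _ := by rw [const_comp p hp]
  exact hdetV
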